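/- Let Z be a symmetric set. If the underlying simplicial set J^*Z is edgy, then J^*Z is a partial groupoid, with anti-involution given in degree n by the action of the flip τ_n and with L given by the action of the fold map χ_n. -/

import Mathlib

/-- A (skeletal) simplicial set: a contravariant functor on the simplex category,
with `obj n` the set of `n`-simplices and `map α` the action of an
order-preserving map `α : [m] → [n]`. -/
structure SSet' where
  obj : ℕ → Type
  map : ∀ {m n : ℕ}, (Fin (m + 1) →o Fin (n + 1)) → obj n → obj m
  map_id : ∀ (n : ℕ) (x : obj n), map OrderHom.id x = x
  map_comp : ∀ {k m n : ℕ} (α : Fin (k + 1) →o Fin (m + 1)) (β : Fin (m + 1) →o Fin (n + 1))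
      (x : obj n), map (β.comp α) x = map α (map β x)

/-- The order-preserving map `ρ_{ij} : [1] → [n]`, `0 ↦ i`, `1 ↦ j` (for `i ≤ j`). -/
def rho {n : ℕ} (i j : Fin (n + 1)) (h : i ≤ j) : Fin 2 →o Fin (n + 1) where
  toFun := ![i, j]
  monotone' := by
    intro a b hab
    fin_cases a <;> fin_cases b <;> simp_all

/-- The `k`-th edge `ρ_{k,k+1}^*(x)` of an `n`-simplex. -/
def SSet'.edge (X : SSet') {n : ℕ} (x : X.obj n) (k : Fin n) : X.obj 1 :=
  X.map (rho k.castSucc k.succ (Fin.castSucc_lt_succ (i := k)).le) x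

/-- A simplicial set is edgy if each simplex is determined by its string of edges. -/
def SSet'.IsEdgy (X : SSet') : Prop :=
  ∀ n : ℕ, 1 ≤ n → Function.Injective fun (x : X.obj n) (k : Fin n) => X.edge x k

/-- Conjugation of an order-preserving map by the flips `τ`. -/
def conj {m n : ℕ} (α : Fin (m + 1) →o Fin (n + 1)) : Fin (m + 1) →o Fin (n + 1) where
  toFun k := (α k.rev).rev
  monotone' := by
    intro a b hab
    exact Fin.rev_le_rev.mpr (α.monotone (Fin.rev_le_rev.mpr hab))

/-- An anti-involution on a simplicial set `X`, i.e. a simplicial map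
`ν : X^op → X` with `ν^op ∘ ν = id`, described levelwise.  Naturality of
`ν : X^op → X` amounts to `ν (X(τ∘α∘τ) x) = X(α) (ν x)`. -/
structure AntiInvolution (X : SSet') where
  app : ∀ n : ℕ, X.obj n → X.obj n
  naturality : ∀ {m n : ℕ} (α : Fin (m + 1) →o Fin (n + 1)) (x : X.obj n),
    app m (X.map (conj α) x) = X.map α (app n x)
  involutive : ∀ (n : ℕ) (x : X.obj n), app n (app n x) = x

/-- The constant map `[1] → [n]` at the last vertex, i.e. `s_0 ∘ (d_0)^n`. -/
def lastConst (n : ℕ) : Fin 2 →o Fin (n + 1) := ⟨fun _ => Fin.last n, monotone_const⟩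

/-- `LSpec X ν x y` says that `y ∈ X_{2n}` has the edge string
`[f_n† | ⋯ | f_1† | f_1 | ⋯ | f_n]`, where `[f_1 | ⋯ | f_n]` is the edge string of
`x ∈ X_n`, and that the total composite `ρ_{0,2n}^*(y)` is the identity
`s_0(d_0^n x)` on the last vertex of `x`. -/
def LSpec (X : SSet') (ν : AntiInvolution X) {n : ℕ} (x : X.obj n) (y : X.obj (n + n)) : Prop :=
  (∀ k : Fin (n + n), X.edge y k =
      if h : (k : ℕ) < n then ν.app 1 (X.edge x ⟨n - 1 - (k : ℕ), by omega⟩)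
      else X.edge x ⟨(k : ℕ) - n, by have := k.isLt; omega⟩) ∧
  X.map (rho 0 (Fin.last (n + n)) (Fin.zero_le _)) y = X.map (lastConst n) x

/-- A partial groupoid structure on a simplicial set: it is edgy, has an
anti-involution which is the identity on vertices, and has operators
`L : X_n → X_{2n}` with `L[f_1|⋯|f_n] = [f_n†|⋯|f_1†|f_1|⋯|f_n]` whose total
composite is an identity. -/
structure PartialGroupoidStruct (X : SSet') where
  edgy : X.IsEdgy
  inv : AntiInvolution X
  inv_zero : ∀ x : X.obj 0, inv.app 0 x = x
  L : ∀ {n : ℕ}, X.obj n → X.obj (n + n)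
  L_spec : ∀ {n : ℕ}, 1 ≤ n → ∀ x : X.obj n, LSpec X inv x (L x)

/-- The Prop-valued version: `X` together with the anti-involution `ν` is a
partial groupoid. -/
def IsPartialGroupoid (X : SSet') (ν : AntiInvolution X) : Prop :=
  X.IsEdgy ∧ (∀ v : X.obj 0, ν.app 0 v = v) ∧
    ∀ n : ℕ, 1 ≤ n → ∀ x : X.obj n, ∃ y : X.obj (n + n), LSpec X ν x y

/-- The matrix form of an `n`-simplex: `x_{ij} = ρ_{ij}^*(x)` for `i ≤ j`, and
`x_{ji} = (x_{ij})†`. -/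
def matrixForm (X : SSet') (ν : AntiInvolution X) {n : ℕ} (x : X.obj n) (i j : Fin (n + 1)) :
    X.obj 1 :=
  if h : i ≤ j then X.map (rho i j h) x
  else ν.app 1 (X.map (rho j i (le_of_not_ge h)) x)

/-- The fold map `χ_n : [2n] → [n]`, `i ↦ |n - i|`. -/
def chi (n : ℕ) (i : Fin (n + n + 1)) : Fin (n + 1) :=
  ⟨max n (i : ℕ) - min n (i : ℕ), by have := i.isLt; omega⟩

/-- A map of simplicial sets. -/
structure SSetHom (X Y : SSet') where
  app : ∀ n : ℕ, X.obj n → Y.obj n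
  naturality : ∀ {m n : ℕ} (α : Fin (m + 1) →o Fin (n + 1)) (x : X.obj n),
    app m (X.map α x) = Y.map α (app n x)
/-- A symmetric (simplicial) set: a contravariant functor on the category `Υ`
of the sets `[n]` and arbitrary functions. -/
structure SymSet where
  obj : ℕ → Type
  map : ∀ {m n : ℕ}, (Fin (m + 1) → Fin (n + 1)) → obj n → obj m
  map_id : ∀ (n : ℕ) (x : obj n), map id x = x
  map_comp : ∀ {k m n : ℕ} (φ : Fin (k + 1) → Fin (m + 1)) (ψ : Fin (m + 1) → Fin (n + 1))
      (x : obj n), map (ψ ∘ φ) x = map φ (map ψ x)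

/-- Restriction `J^*` of a symmetric set along the inclusion `J : Δ → Υ`. -/
def SymSet.restrict (Z : SymSet) : SSet' where
  obj := Z.obj
  map α x := Z.map (⇑α) x
  map_id n x := Z.map_id n x
  map_comp α β x := Z.map_comp (⇑α) (⇑β) x

/-- A map of symmetric sets. -/
structure SymSetHom (Y Z : SymSet) where
  app : ∀ n : ℕ, Y.obj n → Z.obj n
  naturality : ∀ {m n : ℕ} (φ : Fin (m + 1) → Fin (n + 1)) (x : Y.obj n),
    app m (Y.map φ x) = Z.map φ (app n x)

/-- The identity map of symmetric sets. -/
def SymSetHom.id (X : SymSet) : SymSetHom X X where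
  app _ x := x
  naturality _ _ := rfl

/-- Composition of maps of symmetric sets. -/
def SymSetHom.comp {X Y Z : SymSet} (G : SymSetHom Y Z) (F : SymSetHom X Y) : SymSetHom X Z where
  app n x := G.app n (F.app n x)
  naturality φ x := by rw [F.naturality, G.naturality]

/-- Restriction `J^*` of a map of symmetric sets. -/
def SymSetHom.restrict {Y Z : SymSet} (G : SymSetHom Y Z) : SSetHom Y.restrict Z.restrict where
  app := G.app
  naturality α x := G.naturality (⇑α) x

/-- If `Z` is a symmetric set whose underlying simplicial set
`J^*Z` is edgy, then `J^*Z` is a partial groupoid, with anti-involution given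
in degree `n` by the action of the flip `τ_n = Fin.rev` and with `L` given by
the action of the fold map `χ_n`. -/
theorem restrict_edgy_partialGroupoid (Z : SymSet) (h : Z.restrict.IsEdgy) :
    ∃ ν : AntiInvolution Z.restrict,
      (∀ (n : ℕ) (x : Z.obj n), ν.app n x = Z.map (Fin.rev : Fin (n + 1) → Fin (n + 1)) x) ∧
      IsPartialGroupoid Z.restrict ν ∧
      (∀ (n : ℕ), 1 ≤ n → ∀ x : Z.obj n, LSpec Z.restrict ν x (Z.map (chi n) x)) := by

  have mapc : ∀ {m n : ℕ} (φ ψ : Fin (m+1) → Fin (n+1)) (x : Z.obj n), φ = ψ →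
      Z.map φ x = Z.map ψ x := fun φ ψ x e => by rw [e]
  have compc : ∀ {k m n : ℕ} (φ : Fin (k+1) → Fin (m+1)) (ψ : Fin (m+1) → Fin (n+1))
      (x : Z.obj n), Z.map φ (Z.map ψ x) = Z.map (ψ ∘ φ) x :=
    fun φ ψ x => (Z.map_comp φ ψ x).symm
  have rho_ap : ∀ {n : ℕ} (i j : Fin (n+1)) (h : i ≤ j) (t : Fin 2), rho i j h t = ![i, j] t :=
    fun _ _ _ _ => rfl
  set ν : AntiInvolution Z.restrict :=
    { app := fun n x => Z.map (Fin.rev : Fin (n+1) → Fin (n+1)) x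
      naturality := by
        intro m n α x
        change Z.obj n at x
        show Z.map _ (Z.map _ x) = Z.map _ (Z.map _ x)
        rw [compc, compc]
        refine mapc _ _ _ ?_
        funext t
        show ((α t.rev.rev).rev) = (α t).rev
        rw [Fin.rev_rev]
      involutive := by
        intro n x
        change Z.obj n at x
        show Z.map _ (Z.map _ x) = x
        rw [compc]
        have : (Fin.rev ∘ Fin.rev : Fin (n+1) → Fin (n+1)) = id := by
          funext t; simp [Fin.rev_rev]
        rw [this, Z.map_id] } with hν
  have key : ∀ (n : ℕ), 1 ≤ n → ∀ x : Z.obj n, LSpec Z.restrict ν x (Z.map (chi n) x) := by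
    intro n hn x
    constructor
    · intro k
      show Z.map _ (Z.map (chi n) x) = _
      rw [compc]
      by_cases hk : (k : ℕ) < n
      · rw [dif_pos hk]
        show _ = Z.map _ (Z.map _ x)
        rw [compc]
        refine mapc _ _ _ ?_
        funext t
        have hk2 := k.isLt
        fin_cases t <;>
        · apply Fin.ext
          simp [chi, rho_ap, Fin.rev, Fin.ext_iff]
          omega
      · rw [dif_neg hk]
        show _ = Z.map _ x
        refine mapc _ _ _ ?_
        funext t
        have hk2 := k.isLt
        fin_cases t <;>
        · apply Fin.ext
          simp [chi, rho_ap, Fin.ext_iff]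
          omega
    · show Z.map _ (Z.map (chi n) x) = Z.map _ x
      rw [compc]
      refine mapc _ _ _ ?_
      funext t
      fin_cases t <;>
      · apply Fin.ext
        simp [chi, rho_ap, lastConst, Fin.ext_iff]
        all_goals omega
  refine ⟨ν, fun n x => rfl, ⟨h, ?_, fun n hn x => ⟨Z.map (chi n) x, key n hn x⟩⟩, key⟩
  intro v
  change Z.obj 0 at v
  show Z.map _ v = v
  have : (Fin.rev : Fin 1 → Fin 1) = id := by funext t; exact Subsingleton.elim _ _
  rw [this, Z.map_id]
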